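/- Let ν be a multi-index with ν ≠ 0 and let (Υ_j)_{j≥1} be nonnegative real numbers. Then ∑_{j≥1, ν_j ≥ 1} ∑_{m ≤ ν − e_j} |m|! (m_j + 1) Υ_j Υ^m S(ν_j, m_j + 1) ∏_{i≥1, i≠j} S(ν_i, m_i) = ∑_{m ≤ ν} |m|! Υ^m ∏_{i≥1} S(ν_i, m_i). -/

import Mathlib

/-- Stirling numbers of the second kind, as real numbers:
`S(n,k) = (1/k!) ∑_{j=0}^{k} (−1)^{k−j} binom(k,j) j^n`. -/
noncomputable def stirlingS2 (n k : ℕ) : ℝ :=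
  (1 / (k.factorial : ℝ)) *
    ∑ j ∈ Finset.range (k + 1), (-1 : ℝ) ^ (k - j) * (k.choose j : ℝ) * (j : ℝ) ^ n

/-- The order `|ν| = ∑_j ν_j` of a multi-index `ν`. -/
def multiOrder (ν : ℕ →₀ ℕ) : ℕ := ν.sum fun _ k => k

/-- `Υ^m = ∏_{j : m_j ≠ 0} Υ_j^{m_j}`. -/
noncomputable def multiPow (Υ : ℕ → ℝ) (m : ℕ →₀ ℕ) : ℝ := m.prod fun j k => Υ j ^ k

lemma stirling_zero_right (n : ℕ) (hn : n ≠ 0) : stirlingS2 n 0 = 0 := by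
  simp [stirlingS2, zero_pow hn]

lemma multiOrder_add (m n : ℕ →₀ ℕ) : multiOrder (m + n) = multiOrder m + multiOrder n :=
  Finsupp.sum_add_index' (fun _ => rfl) (fun _ _ _ => rfl)

lemma multiOrder_single (j k : ℕ) : multiOrder (Finsupp.single j k) = k :=
  Finsupp.sum_single_index rfl

lemma multiOrder_eq_zero {m : ℕ →₀ ℕ} (h : multiOrder m = 0) : m = 0 := by
  ext i
  by_cases hi : i ∈ m.support
  · have := (Finset.sum_eq_zero_iff.mp h) i hi
    simpa using this
  · simpa using Finsupp.notMem_support_iff.mp hi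

lemma multiPow_add (Υ : ℕ → ℝ) (m n : ℕ →₀ ℕ) :
    multiPow Υ (m + n) = multiPow Υ m * multiPow Υ n :=
  Finsupp.prod_add_index' (fun _ => pow_zero _) (fun _ _ _ => pow_add _ _ _)

lemma multiPow_single (Υ : ℕ → ℝ) (j : ℕ) : multiPow Υ (Finsupp.single j 1) = Υ j := by
  rw [multiPow]
  exact (Finsupp.prod_single_index (h := fun j k => Υ j ^ k) (pow_zero _)).trans (pow_one _)

theorem stmt_16 (ν : ℕ →₀ ℕ) (hν : ν ≠ 0) (Υ : ℕ → ℝ) (hΥ : ∀ j, 0 ≤ Υ j) :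
    ∑ j ∈ ν.support, ∑ m ∈ Finset.Iic (ν - Finsupp.single j 1),
      ((multiOrder m).factorial : ℝ) * ((m j : ℝ) + 1) * Υ j * multiPow Υ m *
        stirlingS2 (ν j) (m j + 1) * ∏ i ∈ ν.support.erase j, stirlingS2 (ν i) (m i)
      = ∑ m ∈ Finset.Iic ν,
          ((multiOrder m).factorial : ℝ) * multiPow Υ m *
            ∏ i ∈ ν.support, stirlingS2 (ν i) (m i) := by

  have hsupp : ν.support.Nonempty := Finsupp.support_nonempty_iff.mpr hν
  symm
  calc
    ∑ m ∈ Finset.Iic ν, ((multiOrder m).factorial : ℝ) * multiPow Υ m *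
          ∏ i ∈ ν.support, stirlingS2 (ν i) (m i)
      = ∑ m ∈ Finset.Iic ν, ∑ j ∈ ν.support,
          (m j : ℝ) * ((multiOrder m - 1).factorial : ℝ) * multiPow Υ m *
            ∏ i ∈ ν.support, stirlingS2 (ν i) (m i) := by
        refine Finset.sum_congr rfl fun m hm => ?_
        by_cases hm0 : m = 0
        · subst hm0
          obtain ⟨i, hi⟩ := hsupp
          have : ∏ i ∈ ν.support, stirlingS2 (ν i) ((0 : ℕ →₀ ℕ) i) = 0 :=
            Finset.prod_eq_zero hi (by
              simpa using stirling_zero_right (ν i) (Finsupp.mem_support_iff.mp hi))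
          simp only [Finsupp.coe_zero, Pi.zero_apply] at this ⊢
          simp [this]
        · have hpos : 0 < multiOrder m := by
            rcases Nat.eq_zero_or_pos (multiOrder m) with h | h
            · exact absurd (multiOrder_eq_zero h) hm0
            · exact h
          have hsum : ∑ j ∈ ν.support, m j = multiOrder m := by
            rw [multiOrder]
            exact (Finsupp.sum_of_support_subset m
              (Finsupp.support_mono (Finset.mem_Iic.mp hm)) (fun _ k => k)
              (fun _ _ => rfl)).symm
          have hfac : ((multiOrder m).factorial : ℝ)
              = (multiOrder m : ℝ) * ((multiOrder m - 1).factorial : ℝ) := by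
            rw [← Nat.cast_mul, Nat.mul_factorial_pred hpos.ne']
          rw [hfac, ← hsum]
          push_cast
          rw [Finset.sum_mul, Finset.sum_mul, Finset.sum_mul]
    _ = ∑ j ∈ ν.support, ∑ m ∈ Finset.Iic ν,
          (m j : ℝ) * ((multiOrder m - 1).factorial : ℝ) * multiPow Υ m *
            ∏ i ∈ ν.support, stirlingS2 (ν i) (m i) := Finset.sum_comm
    _ = _ := by
        refine Finset.sum_congr rfl fun j hj => ?_
        have hj1 : Finsupp.single j 1 ≤ ν :=
          Finsupp.single_le_iff.mpr (Nat.one_le_iff_ne_zero.mpr (Finsupp.mem_support_iff.mp hj))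
        rw [← Finset.sum_filter_of_ne (p := fun m => m j ≠ 0)
          (fun m _ h => by
            intro hmj
            exact h (by simp [hmj]))]
        refine Finset.sum_nbij' (fun m => m - Finsupp.single j 1)
          (fun m => m + Finsupp.single j 1) ?_ ?_ ?_ ?_ ?_
        · intro m hm
          simp only [Finset.mem_filter, Finset.mem_Iic] at hm
          exact Finset.mem_Iic.mpr (tsub_le_tsub_right hm.1 _)
        · intro m hm
          simp only [Finset.mem_Iic] at hm
          simp only [Finset.mem_filter, Finset.mem_Iic]
          constructor
          · exact (le_tsub_iff_right hj1).mp hm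
          · simp [Finsupp.add_apply]
        · intro m hm
          simp only [Finset.mem_filter, Finset.mem_Iic] at hm
          have : Finsupp.single j 1 ≤ m :=
            Finsupp.single_le_iff.mpr (Nat.one_le_iff_ne_zero.mpr hm.2)
          exact tsub_add_cancel_of_le this
        · intro m hm
          exact add_tsub_cancel_right m _
        · intro m hm
          simp only [Finset.mem_filter, Finset.mem_Iic] at hm
          obtain ⟨hle, hne⟩ := hm
          have hsle : Finsupp.single j 1 ≤ m :=
            Finsupp.single_le_iff.mpr (Nat.one_le_iff_ne_zero.mpr hne)
          obtain ⟨m', rfl⟩ : ∃ m', m = m' + Finsupp.single j 1 :=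
            ⟨m - Finsupp.single j 1, (tsub_add_cancel_of_le hsle).symm⟩
          simp only [add_tsub_cancel_right]
          have hmj : ((m' + Finsupp.single j 1 : ℕ →₀ ℕ)) j = m' j + 1 := by
            simp [Finsupp.add_apply]
          have horder : multiOrder (m' + Finsupp.single j 1) = multiOrder m' + 1 := by
            rw [multiOrder_add, multiOrder_single]
          have hpow : multiPow Υ (m' + Finsupp.single j 1) = multiPow Υ m' * Υ j := by
            rw [multiPow_add, multiPow_single]
          have hprod : ∏ i ∈ ν.support, stirlingS2 (ν i) ((m' + Finsupp.single j 1 : ℕ →₀ ℕ) i)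
              = stirlingS2 (ν j) (m' j + 1) *
                ∏ i ∈ ν.support.erase j, stirlingS2 (ν i) (m' i) := by
            rw [← Finset.mul_prod_erase ν.support _ hj, hmj]
            congr 1
            refine Finset.prod_congr rfl fun i hi => ?_
            have hij : i ≠ j := (Finset.mem_erase.mp hi).1
            simp [Finsupp.add_apply, Finsupp.single_apply, hij.symm]
          rw [hmj, horder, hpow, hprod]
          push_cast
          ring
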